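/- Let (G_t)_{t=0}^m be a filtration on a probability space, let (H_t, α_t, φ_t)_{t=0}^m be a conditionally valid testing sequence with respect to (G_t)_{t=0}^m, and let (α_t)_{t=0}^m be a valid α-budget with respect to (G_t)_{t=0}^m. Define the first rejected index τ := min{t : φ_t = 1}, with τ = ∞ if no φ_t equals 1, and set H_∞ := 1. Then P(H_τ = 0) ≤ α. Furthermore, if the testing sequence is conditionally exact, the α-budget is exact, and H_t = 0 almost surely for all t = 0,…,m, then P(H_τ = 0) = α. -/

import Mathlib

open MeasureTheory ProbabilityTheory Filter

namespace SECaux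

variable {Ω : Type*}

/-- no rejection before time `u` -/
def Cs (R : ℕ → Set Ω) (u : ℕ) : Set Ω := ⋂ s ∈ Finset.range u, (R s)ᶜ

/-- remaining budget factor -/
def Df (a : ℕ → Ω → ℝ) (u : ℕ) (ω : Ω) : ℝ := ∏ s ∈ Finset.range u, (1 - a s ω)

/-- information σ-algebra -/
def Fm (G : ℕ → MeasurableSpace Ω) (R : ℕ → Set Ω) (t : ℕ) : MeasurableSpace Ω :=
  G t ⊔ ⨆ s ∈ Finset.range t, MeasurableSpace.generateFrom {R s}

/-- real indicator -/
noncomputable def J (s : Set Ω) : Ω → ℝ := s.indicator (fun _ => (1 : ℝ))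

lemma Cs_def (R : ℕ → Set Ω) (u : ℕ) : Cs R u = ⋂ s ∈ Finset.range u, (R s)ᶜ := rfl
lemma Df_def (a : ℕ → Ω → ℝ) (u : ℕ) :
    Df a u = fun ω => ∏ s ∈ Finset.range u, (1 - a s ω) := rfl
lemma Fm_def (G : ℕ → MeasurableSpace Ω) (R : ℕ → Set Ω) (t : ℕ) :
    Fm G R t = G t ⊔ ⨆ s ∈ Finset.range t, MeasurableSpace.generateFrom {R s} := rfl
lemma J_def (s : Set Ω) : J s = s.indicator (fun _ => (1 : ℝ)) := rfl

lemma Cs_zero (R : ℕ → Set Ω) : Cs R 0 = Set.univ := by simp [Cs]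

lemma Cs_succ (R : ℕ → Set Ω) (u : ℕ) : Cs R (u + 1) = (R u)ᶜ ∩ Cs R u := by
  simp [Cs, Finset.range_add_one]

lemma Cs_anti (R : ℕ → Set Ω) {u v : ℕ} (h : u ≤ v) : Cs R v ⊆ Cs R u := by
  intro ω hω
  simp only [Cs, Set.mem_iInter] at hω ⊢
  exact fun s hs => hω s (Finset.mem_range.2 (lt_of_lt_of_le (Finset.mem_range.1 hs) h))

lemma Cs_subset_compl (R : ℕ → Set Ω) {s u : ℕ} (h : s < u) : Cs R u ⊆ (R s)ᶜ := by
  intro ω hω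
  simp only [Cs, Set.mem_iInter] at hω
  exact hω s (Finset.mem_range.2 h)

lemma Df_zero (a : ℕ → Ω → ℝ) (ω : Ω) : Df a 0 ω = 1 := by simp [Df]

lemma Df_succ (a : ℕ → Ω → ℝ) (u : ℕ) (ω : Ω) :
    Df a (u + 1) ω = Df a u ω * (1 - a u ω) := Finset.prod_range_succ _ _

lemma J_nonneg (s : Set Ω) (ω : Ω) : 0 ≤ J s ω := by
  by_cases h : ω ∈ s <;> simp [J, Set.indicator, h]

lemma J_le_one (s : Set Ω) (ω : Ω) : J s ω ≤ 1 := by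
  by_cases h : ω ∈ s <;> simp [J, Set.indicator, h]

lemma J_abs_le_one (s : Set Ω) (ω : Ω) : |J s ω| ≤ 1 :=
  abs_le.2 ⟨by linarith [J_nonneg s ω], J_le_one s ω⟩

lemma J_mono {s t : Set Ω} (h : s ⊆ t) (ω : Ω) : J s ω ≤ J t ω := by
  by_cases hs : ω ∈ s
  · have := h hs; simp [J, Set.indicator, hs, this]
  · simpa [J, Set.indicator, hs] using J_nonneg t ω

lemma J_inter (s t : Set Ω) (ω : Ω) : J (s ∩ t) ω = J s ω * J t ω := by
  by_cases hs : ω ∈ s <;> by_cases ht : ω ∈ t <;>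
    simp [J, Set.indicator, hs, ht, Set.mem_inter_iff]

lemma J_compl (s : Set Ω) (ω : Ω) : J sᶜ ω = 1 - J s ω := by
  by_cases hs : ω ∈ s <;> simp [J, Set.indicator, hs]

lemma J_of_mem {s : Set Ω} {ω : Ω} (h : ω ∈ s) : J s ω = 1 := by simp [J, Set.indicator, h]
lemma J_of_not_mem {s : Set Ω} {ω : Ω} (h : ω ∉ s) : J s ω = 0 := by simp [J, Set.indicator, h]


section Meas

variable [m0 : MeasurableSpace Ω]

lemma Fm_le {G : ℕ → MeasurableSpace Ω} {R : ℕ → Set Ω} {m : ℕ}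
    (hG_le : ∀ t, G t ≤ m0) (hR_meas : ∀ t ≤ m, MeasurableSet[m0] (R t))
    {t : ℕ} (ht : t ≤ m) : Fm G R t ≤ m0 := by
  refine sup_le (hG_le t) (iSup₂_le fun s hs => ?_)
  refine MeasurableSpace.generateFrom_le fun u hu => ?_
  rw [Set.mem_singleton_iff] at hu
  subst hu
  exact hR_meas s (le_trans (Nat.le_of_lt_succ (Nat.lt_succ_of_lt (Finset.mem_range.1 hs))) ht)

lemma R_mea_Fm {G : ℕ → MeasurableSpace Ω} {R : ℕ → Set Ω} {s t : ℕ} (h : s < t) :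
    MeasurableSet[Fm G R t] (R s) := by
  have h1 : MeasurableSpace.generateFrom {R s} ≤ Fm G R t := by
    refine le_sup_of_le_right ?_
    exact le_biSup (fun s => MeasurableSpace.generateFrom {R s}) (Finset.mem_range.2 h)
  exact h1 _ (MeasurableSpace.measurableSet_generateFrom (Set.mem_singleton _))

lemma Cs_mea_Fm {G : ℕ → MeasurableSpace Ω} {R : ℕ → Set Ω} {u t : ℕ} (h : u ≤ t) :
    MeasurableSet[Fm G R t] (Cs R u) := by
  refine MeasurableSet.biInter (Set.to_countable _) fun s hs => ?_
  exact (R_mea_Fm (lt_of_lt_of_le (Finset.mem_range.1 hs) h)).compl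

lemma Cs_mea_m0 {R : ℕ → Set Ω} {m : ℕ} (hR_meas : ∀ t ≤ m, MeasurableSet[m0] (R t))
    {u : ℕ} (hu : u ≤ m + 1) : MeasurableSet[m0] (Cs R u) := by
  refine MeasurableSet.biInter (Set.to_countable _) fun s hs => ?_
  exact (hR_meas s (by have := Finset.mem_range.1 hs; omega)).compl

lemma Df_mea {M : MeasurableSpace Ω} {a : ℕ → Ω → ℝ} {u : ℕ}
    (h : ∀ s < u, Measurable[M] (a s)) : Measurable[M] (Df a u) := by
  refine Finset.measurable_prod _ fun s hs => ?_
  exact (@measurable_const ℝ Ω _ M 1).sub (h s (Finset.mem_range.1 hs))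

omit m0 in
lemma J_mea {M : MeasurableSpace Ω} {s : Set Ω} (hs : MeasurableSet[M] s) :
    Measurable[M] (J s) := measurable_const.indicator hs

omit m0 in
lemma J_smea {M : MeasurableSpace Ω} {s : Set Ω} (hs : MeasurableSet[M] s) :
    StronglyMeasurable[M] (J s) := (J_mea hs).stronglyMeasurable

lemma integral_J {μ : Measure Ω} {s : Set Ω} (hs : MeasurableSet[m0] s) :
    ∫ ω, J s ω ∂μ = (μ s).toReal := integral_indicator_one hs

end Meas


section Condexp

variable [m0 : MeasurableSpace Ω] {μ : Measure Ω} [IsProbabilityMeasure μ]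

lemma integrable_of_bound {f : Ω → ℝ} (hf : AEStronglyMeasurable f μ)
    (hb : ∀ᵐ ω ∂μ, |f ω| ≤ 1) : Integrable f μ :=
  (integrable_const (1 : ℝ)).mono' hf
    (by filter_upwards [hb] with ω h; simpa [Real.norm_eq_abs] using h)

lemma J_integrable {s : Set Ω} (hs : MeasurableSet[m0] s) : Integrable (J s) μ :=
  integrable_of_bound ((J_mea hs).aestronglyMeasurable (μ := μ))
    (Eventually.of_forall (J_abs_le_one s))

theorem wcondexp {F : MeasurableSpace Ω} (hF : F ≤ m0)
    {Rt : Set Ω} (hRt : MeasurableSet[m0] Rt) {v : Ω → ℝ}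
    (hv : StronglyMeasurable[F] v) (hvb : ∀ᵐ ω ∂μ, |v ω| ≤ 1) :
    ∫ ω, v ω * J Rt ω ∂μ = ∫ ω, v ω * (μ[J Rt | F]) ω ∂μ := by
  have hgmeas : Measurable[m0] (J Rt) := J_mea hRt
  have hgint : Integrable (J Rt) μ := J_integrable (m0 := m0) hRt
  have hvm : @AEStronglyMeasurable Ω ℝ _ m0 m0 v μ := (hv.mono hF).aestronglyMeasurable
  have hbd : ∀ᵐ ω ∂μ, ‖(v * J Rt) ω‖ ≤ 1 := by
    filter_upwards [hvb] with ω h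
    simp only [Pi.mul_apply, Real.norm_eq_abs, abs_mul]
    calc |v ω| * |J Rt ω| ≤ 1 * 1 := mul_le_mul h (J_abs_le_one Rt ω) (abs_nonneg _) zero_le_one
      _ = 1 := by ring
  have hvg : Integrable (v * J Rt) μ := (integrable_const (1 : ℝ)).mono'
    (hvm.mul (hgmeas.aestronglyMeasurable (μ := μ))) hbd
  have h1 := condExp_mul_of_stronglyMeasurable_left hv hvg hgint
  calc ∫ ω, v ω * J Rt ω ∂μ = ∫ ω, (v * J Rt) ω ∂μ := rfl
    _ = ∫ ω, (μ[v * J Rt | F]) ω ∂μ := (integral_condExp hF).symm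
    _ = ∫ ω, (v * μ[J Rt | F]) ω ∂μ := integral_congr_ae h1
    _ = ∫ ω, v ω * (μ[J Rt | F]) ω ∂μ := rfl

theorem condexp_btw {F : MeasurableSpace Ω} (hF : F ≤ m0) {Rt : Set Ω}
    (hRt : MeasurableSet[m0] Rt) :
    ∀ᵐ ω ∂μ, 0 ≤ (μ[J Rt | F]) ω ∧ (μ[J Rt | F]) ω ≤ 1 := by
  have hgint : Integrable (J Rt) μ := J_integrable (m0 := m0) hRt
  have h1 : 0 ≤ᵐ[μ] μ[J Rt | F] :=
    condExp_nonneg (Eventually.of_forall fun ω => J_nonneg Rt ω)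
  have h2 : μ[J Rt | F] ≤ᵐ[μ] μ[(fun _ => (1 : ℝ)) | F] :=
    condExp_mono hgint (integrable_const 1) (Eventually.of_forall fun ω => J_le_one Rt ω)
  have h3 : μ[(fun _ => (1 : ℝ)) | F] = fun _ => (1 : ℝ) := condExp_const hF 1
  filter_upwards [h1, h2] with ω hω1 hω2
  refine ⟨hω1, ?_⟩
  have := hω2
  rw [h3] at this
  exact this

theorem int_weight_le {F : MeasurableSpace Ω} (hF : F ≤ m0)
    {Rt : Set Ω} (hRt : MeasurableSet[m0] Rt) {v b : Ω → ℝ}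
    (hv : StronglyMeasurable[F] v) (hvb : ∀ᵐ ω ∂μ, |v ω| ≤ 1) (hv0 : 0 ≤ᵐ[μ] v)
    (hb : Measurable[m0] b) (hbb : ∀ᵐ ω ∂μ, |b ω| ≤ 1)
    (hcond : ∀ᵐ ω ∂μ, v ω ≠ 0 → (μ[J Rt | F]) ω ≤ b ω) :
    ∫ ω, v ω * J Rt ω ∂μ ≤ ∫ ω, v ω * b ω ∂μ := by
  rw [wcondexp (m0 := m0) hF hRt hv hvb]
  have hvm : @AEStronglyMeasurable Ω ℝ _ m0 m0 v μ := (hv.mono hF).aestronglyMeasurable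
  have hcem : @AEStronglyMeasurable Ω ℝ _ m0 m0 (μ[J Rt | F]) μ :=
    (stronglyMeasurable_condExp.mono hF).aestronglyMeasurable
  have hbtw := condexp_btw (m0 := m0) (μ := μ) hF hRt
  have h1 : Integrable (fun ω => v ω * (μ[J Rt | F]) ω) μ := by
    refine integrable_of_bound (m0 := m0) (hvm.mul hcem) ?_
    filter_upwards [hvb, hbtw] with ω h1 h2
    rw [abs_mul]
    calc |v ω| * |(μ[J Rt | F]) ω| ≤ 1 * 1 :=
          mul_le_mul h1 (abs_le.2 ⟨by linarith [h2.1], h2.2⟩) (abs_nonneg _) zero_le_one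
      _ = 1 := by ring
  have h2 : Integrable (fun ω => v ω * b ω) μ := by
    refine integrable_of_bound (m0 := m0) (hvm.mul (hb.aestronglyMeasurable (μ := μ))) ?_
    filter_upwards [hvb, hbb] with ω h1 h2
    rw [abs_mul]
    calc |v ω| * |b ω| ≤ 1 * 1 := mul_le_mul h1 h2 (abs_nonneg _) zero_le_one
      _ = 1 := by ring
  refine integral_mono_ae h1 h2 ?_
  filter_upwards [hv0, hcond] with ω h0 hc
  by_cases hz : v ω = 0
  · simp [hz]
  · exact mul_le_mul_of_nonneg_left (hc hz) h0

theorem int_weight_eq {F : MeasurableSpace Ω} (hF : F ≤ m0)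
    {Rt : Set Ω} (hRt : MeasurableSet[m0] Rt) {v b : Ω → ℝ}
    (hv : StronglyMeasurable[F] v) (hvb : ∀ᵐ ω ∂μ, |v ω| ≤ 1)
    (hcond : ∀ᵐ ω ∂μ, v ω ≠ 0 → (μ[J Rt | F]) ω = b ω) :
    ∫ ω, v ω * J Rt ω ∂μ = ∫ ω, v ω * b ω ∂μ := by
  rw [wcondexp (m0 := m0) hF hRt hv hvb]
  refine integral_congr_ae ?_
  filter_upwards [hcond] with ω hc
  by_cases hz : v ω = 0
  · simp [hz]
  · rw [hc hz]

end Condexp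


section Main

variable [m0 : MeasurableSpace Ω] (μ : Measure Ω) [IsProbabilityMeasure μ]

theorem main_le (m : ℕ) (G : ℕ → MeasurableSpace Ω)
    (hG_mono : ∀ s t : ℕ, s ≤ t → G s ≤ G t) (hG_le : ∀ t, G t ≤ m0)
    (N R : ℕ → Set Ω) (a : ℕ → Ω → ℝ) (α : ℝ)
    (hN_meas : ∀ t ≤ m, MeasurableSet[G t] (N t))
    (hR_meas : ∀ t ≤ m, MeasurableSet[m0] (R t))
    (ha_meas : ∀ t ≤ m, Measurable[G t] (a t))
    (ha_mem : ∀ t ≤ m, ∀ ω, a t ω ∈ Set.Icc (0 : ℝ) 1)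
    (hbudget : ∀ᵐ ω ∂μ, 1 - α ≤ Df a (m + 1) ω)
    (hα1 : α < 1)
    (hvalid : ∀ t ≤ m, ∀ᵐ ω ∂μ,
      ω ∈ N t ∩ Cs R t → (μ[J (R t) | Fm G R t]) ω ≤ a t ω) :
    ∑ t ∈ Finset.range (m + 1), (μ ((R t ∩ Cs R t) ∩ N t)).toReal ≤ α := by
  -- pointwise facts about the product
  have hDanti : ∀ u v : ℕ, u ≤ v → v ≤ m + 1 → ∀ ω, Df a v ω ≤ Df a u ω := by
    intro u v huv hv ω
    have hsplit : Df a u ω * ∏ s ∈ Finset.Ico u v, (1 - a s ω) = Df a v ω :=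
      Finset.prod_range_mul_prod_Ico _ huv
    have h0 : 0 ≤ Df a u ω :=
      Finset.prod_nonneg fun s hs => by
        have := (ha_mem s (by have := Finset.mem_range.1 hs; omega) ω).2; linarith
    have h1 : ∏ s ∈ Finset.Ico u v, (1 - a s ω) ≤ 1 :=
      Finset.prod_le_one
        (fun s hs => by
          have := (ha_mem s (by have := Finset.mem_Ico.1 hs; omega) ω).2; linarith)
        (fun s hs => by
          have := (ha_mem s (by have := Finset.mem_Ico.1 hs; omega) ω).1; linarith)
    calc Df a v ω = Df a u ω * ∏ s ∈ Finset.Ico u v, (1 - a s ω) := hsplit.symm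
      _ ≤ Df a u ω * 1 := by
          refine mul_le_mul_of_nonneg_left h1 h0
      _ = Df a u ω := mul_one _
  have haeD : ∀ᵐ ω ∂μ, ∀ u ≤ m + 1, 1 - α ≤ Df a u ω := by
    filter_upwards [hbudget] with ω hω
    intro u hu
    exact le_trans hω (hDanti u (m + 1) hu le_rfl ω)
  have hamem' : ∀ u ≤ m, ∀ ω, |a u ω| ≤ 1 := by
    intro u hu ω
    have := ha_mem u hu ω
    rw [Set.mem_Icc] at this
    exact abs_le.2 ⟨by linarith [this.1], this.2⟩
  -- the backward induction
  have claim : ∀ d, d ≤ m + 1 →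
      ∑ t ∈ Finset.Ico (m + 1 - d) (m + 1), (μ ((R t ∩ Cs R t) ∩ N t)).toReal
        ≤ ∫ ω, J (Cs R (m + 1 - d)) ω * (1 - (1 - α) / Df a (m + 1 - d) ω) ∂μ := by
    intro d
    induction d with
    | zero =>
      intro _
      simp only [Nat.sub_zero, Finset.Ico_self, Finset.sum_empty]
      refine integral_nonneg_of_ae ?_
      filter_upwards [haeD] with ω hω
      have hd : 1 - α ≤ Df a (m + 1) ω := hω (m + 1) le_rfl
      have hpos : 0 < Df a (m + 1) ω := by linarith
      have h1 : (1 - α) / Df a (m + 1) ω ≤ 1 := (div_le_one hpos).2 hd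
      have := J_nonneg (Cs R (m + 1)) ω
      exact mul_nonneg this (by linarith)
    | succ d ih =>
      intro hd
      have h1 : m + 1 - (d + 1) = m - d := by omega
      have h2 : m + 1 - d = (m - d) + 1 := by omega
      rw [h1]
      set u := m - d with hu
      have hum : u ≤ m := by omega
      have hIH := ih (by omega)
      rw [h2] at hIH
      -- measurability
      have hRu : MeasurableSet[m0] (R u) := hR_meas u hum
      have hCu : MeasurableSet[m0] (Cs R u) := Cs_mea_m0 hR_meas (by omega)
      have hCu1 : MeasurableSet[m0] (Cs R (u + 1)) := Cs_mea_m0 hR_meas (by omega)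
      have hNu : MeasurableSet[m0] (N u) := hG_le u _ (hN_meas u hum)
      have hNCu : MeasurableSet[m0] (N u ∩ Cs R u) := hNu.inter hCu
      have hau : Measurable[m0] (a u) := (ha_meas u hum).mono (hG_le u) le_rfl
      have hDu1m : Measurable[m0] (Df a (u + 1)) :=
        Df_mea fun s hs => (ha_meas s (by omega)).mono (hG_le s) le_rfl
      have hDum : Measurable[m0] (Df a u) :=
        Df_mea fun s hs => (ha_meas s (by omega)).mono (hG_le s) le_rfl
      have hcm : Measurable[m0] (fun ω => (1 - α) / Df a (u + 1) ω) := hDu1m.const_div _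
      have hcm' : Measurable[m0] (fun ω => (1 - α) / Df a u ω) := hDum.const_div _
      -- a.e. facts
      have hc : ∀ᵐ ω ∂μ, 0 ≤ (1 - α) / Df a (u + 1) ω ∧ (1 - α) / Df a (u + 1) ω ≤ 1 ∧
          ((1 - α) / Df a (u + 1) ω) * (1 - a u ω) = (1 - α) / Df a u ω ∧
          0 ≤ (1 - α) / Df a u ω ∧ (1 - α) / Df a u ω ≤ 1 := by
        filter_upwards [haeD] with ω hω
        have hα' : (0 : ℝ) < 1 - α := by linarith
        have hd1 : 1 - α ≤ Df a (u + 1) ω := hω (u + 1) (by omega)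
        have hd0 : 1 - α ≤ Df a u ω := hω u (by omega)
        have hp1 : 0 < Df a (u + 1) ω := lt_of_lt_of_le hα' hd1
        have hp0 : 0 < Df a u ω := lt_of_lt_of_le hα' hd0
        have hs : Df a (u + 1) ω = Df a u ω * (1 - a u ω) := Df_succ a u ω
        have hne : (1 : ℝ) - a u ω ≠ 0 := by
          intro h; rw [hs, h, mul_zero] at hp1; exact lt_irrefl 0 hp1
        refine ⟨div_nonneg (le_of_lt hα') (le_of_lt hp1), (div_le_one hp1).2 hd1, ?_,
          div_nonneg (le_of_lt hα') (le_of_lt hp0), (div_le_one hp0).2 hd0⟩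
        rw [hs, ← div_div, div_mul_cancel₀ _ hne]
      -- integrability
      have hib : ∀ f : Ω → ℝ, Measurable[m0] f → (∀ᵐ ω ∂μ, |f ω| ≤ 1) → Integrable f μ :=
        fun f hf hb => integrable_of_bound (hf.aestronglyMeasurable (μ := μ)) hb
      have hi1 : Integrable (fun ω => J (N u ∩ Cs R u) ω * J (R u) ω) μ := by
        refine hib _ ((J_mea hNCu).mul (J_mea hRu)) (Eventually.of_forall fun ω => ?_)
        rw [abs_mul]
        calc |J (N u ∩ Cs R u) ω| * |J (R u) ω| ≤ 1 * 1 :=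
              mul_le_mul (J_abs_le_one _ _) (J_abs_le_one _ _) (abs_nonneg _) zero_le_one
          _ = 1 := by ring
      have habs : ∀ᵐ ω ∂μ, |1 - (1 - α) / Df a (u + 1) ω| ≤ 1 := by
        filter_upwards [hc] with ω hω
        exact abs_le.2 ⟨by linarith [hω.2.1], by linarith [hω.1]⟩
      have hi2 : Integrable (fun ω => J (Cs R (u + 1)) ω * (1 - (1 - α) / Df a (u + 1) ω)) μ := by
        refine hib _ ((J_mea hCu1).mul (measurable_const.sub hcm)) ?_
        filter_upwards [habs] with ω hω
        rw [abs_mul]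
        calc |J (Cs R (u + 1)) ω| * |1 - (1 - α) / Df a (u + 1) ω| ≤ 1 * 1 :=
              mul_le_mul (J_abs_le_one _ _) hω (abs_nonneg _) zero_le_one
          _ = 1 := by ring
      have hvabs : ∀ᵐ ω ∂μ, |J (N u ∩ Cs R u) ω * ((1 - α) / Df a (u + 1) ω)| ≤ 1 := by
        filter_upwards [hc] with ω hω
        rw [abs_mul]
        calc |J (N u ∩ Cs R u) ω| * |(1 - α) / Df a (u + 1) ω| ≤ 1 * 1 :=
              mul_le_mul (J_abs_le_one _ _) (abs_le.2 ⟨by linarith [hω.1], hω.2.1⟩)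
                (abs_nonneg _) zero_le_one
          _ = 1 := by ring
      have hi3 : Integrable
          (fun ω => J (N u ∩ Cs R u) ω * ((1 - α) / Df a (u + 1) ω) * J (R u) ω) μ := by
        refine hib _ (((J_mea hNCu).mul hcm).mul (J_mea hRu)) ?_
        filter_upwards [hvabs] with ω hω
        rw [abs_mul]
        calc |J (N u ∩ Cs R u) ω * ((1 - α) / Df a (u + 1) ω)| * |J (R u) ω| ≤ 1 * 1 :=
              mul_le_mul hω (J_abs_le_one _ _) (abs_nonneg _) zero_le_one
          _ = 1 := by ring
      have hi4 : Integrable (fun ω => J (Cs R u) ω * (1 - (1 - α) / Df a (u + 1) ω)) μ := by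
        refine hib _ ((J_mea hCu).mul (measurable_const.sub hcm)) ?_
        filter_upwards [habs] with ω hω
        rw [abs_mul]
        calc |J (Cs R u) ω| * |1 - (1 - α) / Df a (u + 1) ω| ≤ 1 * 1 :=
              mul_le_mul (J_abs_le_one _ _) hω (abs_nonneg _) zero_le_one
          _ = 1 := by ring
      have hi5 : Integrable
          (fun ω => J (N u ∩ Cs R u) ω * ((1 - α) / Df a (u + 1) ω) * a u ω) μ := by
        refine hib _ (((J_mea hNCu).mul hcm).mul hau) ?_
        filter_upwards [hvabs] with ω hω
        rw [abs_mul]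
        calc |J (N u ∩ Cs R u) ω * ((1 - α) / Df a (u + 1) ω)| * |a u ω| ≤ 1 * 1 :=
              mul_le_mul hω (hamem' u hum ω) (abs_nonneg _) zero_le_one
          _ = 1 := by ring
      have hi6 : Integrable (fun ω => J (Cs R u) ω * (1 - (1 - α) / Df a u ω)) μ := by
        refine hib _ ((J_mea hCu).mul (measurable_const.sub hcm')) ?_
        filter_upwards [hc] with ω hω
        rw [abs_mul]
        calc |J (Cs R u) ω| * |1 - (1 - α) / Df a u ω| ≤ 1 * 1 :=
              mul_le_mul (J_abs_le_one _ _)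
                (abs_le.2 ⟨by linarith [hω.2.2.2.2], by linarith [hω.2.2.2.1]⟩)
                (abs_nonneg _) zero_le_one
          _ = 1 := by ring
      -- the measure as an integral
      have hτ : (μ ((R u ∩ Cs R u) ∩ N u)).toReal
          = ∫ ω, J (N u ∩ Cs R u) ω * J (R u) ω ∂μ := by
        have hset : (R u ∩ Cs R u) ∩ N u = (N u ∩ Cs R u) ∩ R u := by
          ext ω; simp only [Set.mem_inter_iff]; tauto
        rw [hset, ← integral_J (hNCu.inter hRu)]
        exact integral_congr_ae (Eventually.of_forall fun ω => J_inter _ _ ω)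
      -- conditional validity via the weight lemma
      have hw : ∫ ω, J (N u ∩ Cs R u) ω * ((1 - α) / Df a (u + 1) ω) * J (R u) ω ∂μ
          ≤ ∫ ω, J (N u ∩ Cs R u) ω * ((1 - α) / Df a (u + 1) ω) * a u ω ∂μ := by
        have hFu : Fm G R u ≤ m0 := Fm_le hG_le hR_meas hum
        have hNCuF : MeasurableSet[Fm G R u] (N u ∩ Cs R u) := by
          refine MeasurableSet.inter ?_ (Cs_mea_Fm le_rfl)
          exact (le_sup_left : G u ≤ Fm G R u) _ (hN_meas u hum)
        have hDF : Measurable[Fm G R u] (Df a (u + 1)) := by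
          refine Df_mea fun s hs => ?_
          have h1 : G s ≤ Fm G R u := le_trans (hG_mono s u (by omega)) le_sup_left
          exact (ha_meas s (by omega)).mono h1 le_rfl
        have hvF : StronglyMeasurable[Fm G R u]
            (fun ω => J (N u ∩ Cs R u) ω * ((1 - α) / Df a (u + 1) ω)) :=
          ((J_mea hNCuF).mul (hDF.const_div _)).stronglyMeasurable
        refine int_weight_le (m0 := m0) hFu hRu hvF hvabs ?_ hau
          (Eventually.of_forall (hamem' u hum)) ?_
        · filter_upwards [hc] with ω hω
          exact mul_nonneg (J_nonneg _ _) hω.1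
        · filter_upwards [hvalid u hum, hc] with ω hω hcω
          intro hz
          have hmem : ω ∈ N u ∩ Cs R u := by
            by_contra hmem
            exact hz (by rw [J_of_not_mem hmem, zero_mul])
          exact le_trans (hω hmem) le_rfl
      -- assembling the step
      rw [Finset.sum_eq_sum_Ico_succ_bot (by omega : u < m + 1)]
      calc (μ ((R u ∩ Cs R u) ∩ N u)).toReal
            + ∑ t ∈ Finset.Ico (u + 1) (m + 1), (μ ((R t ∩ Cs R t) ∩ N t)).toReal
          ≤ (∫ ω, J (N u ∩ Cs R u) ω * J (R u) ω ∂μ)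
            + ∫ ω, J (Cs R (u + 1)) ω * (1 - (1 - α) / Df a (u + 1) ω) ∂μ := by
            rw [hτ]; exact add_le_add_right hIH _
        _ = ∫ ω, (J (N u ∩ Cs R u) ω * J (R u) ω
            + J (Cs R (u + 1)) ω * (1 - (1 - α) / Df a (u + 1) ω)) ∂μ :=
            (integral_add hi1 hi2).symm
        _ ≤ ∫ ω, (J (N u ∩ Cs R u) ω * ((1 - α) / Df a (u + 1) ω) * J (R u) ω
            + J (Cs R u) ω * (1 - (1 - α) / Df a (u + 1) ω)) ∂μ := by
            refine integral_mono_ae (hi1.add hi2) (hi3.add hi4) ?_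
            filter_upwards [hc] with ω hω
            have hPn : J (N u ∩ Cs R u) ω ≤ J (Cs R u) ω := J_mono Set.inter_subset_right ω
            have hC1 : J (Cs R (u + 1)) ω = (1 - J (R u) ω) * J (Cs R u) ω := by
              rw [Cs_succ, J_inter, J_compl]
            have hkey : 0 ≤ J (R u) ω * (1 - (1 - α) / Df a (u + 1) ω)
                * (J (Cs R u) ω - J (N u ∩ Cs R u) ω) :=
              mul_nonneg (mul_nonneg (J_nonneg _ _) (by linarith [hω.2.1])) (by linarith)
            have hring : J (N u ∩ Cs R u) ω * ((1 - α) / Df a (u + 1) ω) * J (R u) ω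
                + J (Cs R u) ω * (1 - (1 - α) / Df a (u + 1) ω)
                - (J (N u ∩ Cs R u) ω * J (R u) ω
                  + (1 - J (R u) ω) * J (Cs R u) ω * (1 - (1 - α) / Df a (u + 1) ω))
                = J (R u) ω * (1 - (1 - α) / Df a (u + 1) ω)
                  * (J (Cs R u) ω - J (N u ∩ Cs R u) ω)
                  - J (N u ∩ Cs R u) ω * J (R u) ω * (1 - ((1 - α) / Df a (u + 1) ω))
                  + J (N u ∩ Cs R u) ω * J (R u) ω * (1 - ((1 - α) / Df a (u + 1) ω)) := by
              ring
            rw [hC1]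
            nlinarith [hkey]
        _ = (∫ ω, J (N u ∩ Cs R u) ω * ((1 - α) / Df a (u + 1) ω) * J (R u) ω ∂μ)
            + ∫ ω, J (Cs R u) ω * (1 - (1 - α) / Df a (u + 1) ω) ∂μ := integral_add hi3 hi4
        _ ≤ (∫ ω, J (N u ∩ Cs R u) ω * ((1 - α) / Df a (u + 1) ω) * a u ω ∂μ)
            + ∫ ω, J (Cs R u) ω * (1 - (1 - α) / Df a (u + 1) ω) ∂μ := add_le_add_left hw _
        _ = ∫ ω, (J (N u ∩ Cs R u) ω * ((1 - α) / Df a (u + 1) ω) * a u ω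
            + J (Cs R u) ω * (1 - (1 - α) / Df a (u + 1) ω)) ∂μ := (integral_add hi5 hi4).symm
        _ ≤ ∫ ω, J (Cs R u) ω * (1 - (1 - α) / Df a u ω) ∂μ := by
            refine integral_mono_ae (hi5.add hi4) hi6 ?_
            filter_upwards [hc] with ω hω
            have hPn : J (N u ∩ Cs R u) ω ≤ J (Cs R u) ω := J_mono Set.inter_subset_right ω
            have hau0 : 0 ≤ a u ω := (ha_mem u hum ω).1
            have hring : J (Cs R u) ω * (1 - ((1 - α) / Df a (u + 1) ω) * (1 - a u ω))
                - (J (N u ∩ Cs R u) ω * ((1 - α) / Df a (u + 1) ω) * a u ω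
                  + J (Cs R u) ω * (1 - (1 - α) / Df a (u + 1) ω))
                = (J (Cs R u) ω - J (N u ∩ Cs R u) ω) * (((1 - α) / Df a (u + 1) ω) * a u ω) := by
              ring
            have hkey : 0 ≤ (J (Cs R u) ω - J (N u ∩ Cs R u) ω)
                * (((1 - α) / Df a (u + 1) ω) * a u ω) :=
              mul_nonneg (by linarith) (mul_nonneg hω.1 hau0)
            rw [← hω.2.2.1]
            linarith
  -- conclude
  have h0 : m + 1 - (m + 1) = 0 := by omega
  have := claim (m + 1) le_rfl
  rw [h0] at this
  have heval : ∫ ω, J (Cs R 0) ω * (1 - (1 - α) / Df a 0 ω) ∂μ = α := by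
    have hf : (fun ω => J (Cs R 0) ω * (1 - (1 - α) / Df a 0 ω)) = fun _ => α := by
      funext ω
      rw [Cs_zero, Df_zero, J_of_mem (Set.mem_univ ω)]
      simp
    rw [hf, integral_const]
    simp
  rw [heval, ← Finset.range_eq_Ico] at this
  exact this


theorem main_eq (m : ℕ) (G : ℕ → MeasurableSpace Ω)
    (hG_mono : ∀ s t : ℕ, s ≤ t → G s ≤ G t) (hG_le : ∀ t, G t ≤ m0)
    (N R : ℕ → Set Ω) (a : ℕ → Ω → ℝ) (α : ℝ)
    (hN_meas : ∀ t ≤ m, MeasurableSet[G t] (N t))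
    (hR_meas : ∀ t ≤ m, MeasurableSet[m0] (R t))
    (ha_meas : ∀ t ≤ m, Measurable[G t] (a t))
    (ha_mem : ∀ t ≤ m, ∀ ω, a t ω ∈ Set.Icc (0 : ℝ) 1)
    (hbudget : ∀ᵐ ω ∂μ, Df a (m + 1) ω = 1 - α)
    (hα1 : α < 1)
    (hvalid : ∀ t ≤ m, ∀ᵐ ω ∂μ,
      ω ∈ N t ∩ Cs R t → (μ[J (R t) | Fm G R t]) ω = a t ω)
    (hN_ae : ∀ t ≤ m, ∀ᵐ ω ∂μ, ω ∈ N t) :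
    ∑ t ∈ Finset.range (m + 1), (μ ((R t ∩ Cs R t) ∩ N t)).toReal = α := by
  have hDanti : ∀ u v : ℕ, u ≤ v → v ≤ m + 1 → ∀ ω, Df a v ω ≤ Df a u ω := by
    intro u v huv hv ω
    have hsplit : Df a u ω * ∏ s ∈ Finset.Ico u v, (1 - a s ω) = Df a v ω :=
      Finset.prod_range_mul_prod_Ico _ huv
    have h0 : 0 ≤ Df a u ω :=
      Finset.prod_nonneg fun s hs => by
        have := (ha_mem s (by have := Finset.mem_range.1 hs; omega) ω).2; linarith
    have h1 : ∏ s ∈ Finset.Ico u v, (1 - a s ω) ≤ 1 :=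
      Finset.prod_le_one
        (fun s hs => by
          have := (ha_mem s (by have := Finset.mem_Ico.1 hs; omega) ω).2; linarith)
        (fun s hs => by
          have := (ha_mem s (by have := Finset.mem_Ico.1 hs; omega) ω).1; linarith)
    calc Df a v ω = Df a u ω * ∏ s ∈ Finset.Ico u v, (1 - a s ω) := hsplit.symm
      _ ≤ Df a u ω * 1 := mul_le_mul_of_nonneg_left h1 h0
      _ = Df a u ω := mul_one _
  have haeD : ∀ᵐ ω ∂μ, ∀ u ≤ m + 1, 1 - α ≤ Df a u ω := by
    filter_upwards [hbudget] with ω hω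
    intro u hu
    exact le_trans (le_of_eq hω.symm) (hDanti u (m + 1) hu le_rfl ω)
  have hamem' : ∀ u ≤ m, ∀ ω, |a u ω| ≤ 1 := by
    intro u hu ω
    have := ha_mem u hu ω
    rw [Set.mem_Icc] at this
    exact abs_le.2 ⟨by linarith [this.1], this.2⟩
  have claim : ∀ d, d ≤ m + 1 →
      ∑ t ∈ Finset.Ico (m + 1 - d) (m + 1), (μ ((R t ∩ Cs R t) ∩ N t)).toReal
        = ∫ ω, J (Cs R (m + 1 - d)) ω * (1 - (1 - α) / Df a (m + 1 - d) ω) ∂μ := by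
    intro d
    induction d with
    | zero =>
      intro _
      simp only [Nat.sub_zero, Finset.Ico_self, Finset.sum_empty]
      symm
      refine integral_eq_zero_of_ae ?_
      filter_upwards [hbudget] with ω hω
      have hne : Df a (m + 1) ω ≠ 0 := by rw [hω]; intro h; linarith
      rw [hω, div_self (by intro h; linarith : (1:ℝ) - α ≠ 0)]
      simp
    | succ d ih =>
      intro hd
      have h1 : m + 1 - (d + 1) = m - d := by omega
      have h2 : m + 1 - d = (m - d) + 1 := by omega
      rw [h1]
      set u := m - d with hu
      have hum : u ≤ m := by omega
      have hIH := ih (by omega)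
      rw [h2] at hIH
      have hRu : MeasurableSet[m0] (R u) := hR_meas u hum
      have hCu : MeasurableSet[m0] (Cs R u) := Cs_mea_m0 hR_meas (by omega)
      have hCu1 : MeasurableSet[m0] (Cs R (u + 1)) := Cs_mea_m0 hR_meas (by omega)
      have hNu : MeasurableSet[m0] (N u) := hG_le u _ (hN_meas u hum)
      have hNCu : MeasurableSet[m0] (N u ∩ Cs R u) := hNu.inter hCu
      have hau : Measurable[m0] (a u) := (ha_meas u hum).mono (hG_le u) le_rfl
      have hDu1m : Measurable[m0] (Df a (u + 1)) :=
        Df_mea fun s hs => (ha_meas s (by omega)).mono (hG_le s) le_rfl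
      have hDum : Measurable[m0] (Df a u) :=
        Df_mea fun s hs => (ha_meas s (by omega)).mono (hG_le s) le_rfl
      have hcm : Measurable[m0] (fun ω => (1 - α) / Df a (u + 1) ω) := hDu1m.const_div _
      have hcm' : Measurable[m0] (fun ω => (1 - α) / Df a u ω) := hDum.const_div _
      have hc : ∀ᵐ ω ∂μ, 0 ≤ (1 - α) / Df a (u + 1) ω ∧ (1 - α) / Df a (u + 1) ω ≤ 1 ∧
          ((1 - α) / Df a (u + 1) ω) * (1 - a u ω) = (1 - α) / Df a u ω ∧
          0 ≤ (1 - α) / Df a u ω ∧ (1 - α) / Df a u ω ≤ 1 := by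
        filter_upwards [haeD] with ω hω
        have hα' : (0 : ℝ) < 1 - α := by linarith
        have hd1 : 1 - α ≤ Df a (u + 1) ω := hω (u + 1) (by omega)
        have hd0 : 1 - α ≤ Df a u ω := hω u (by omega)
        have hp1 : 0 < Df a (u + 1) ω := lt_of_lt_of_le hα' hd1
        have hp0 : 0 < Df a u ω := lt_of_lt_of_le hα' hd0
        have hs : Df a (u + 1) ω = Df a u ω * (1 - a u ω) := Df_succ a u ω
        have hne : (1 : ℝ) - a u ω ≠ 0 := by
          intro h; rw [hs, h, mul_zero] at hp1; exact lt_irrefl 0 hp1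
        refine ⟨div_nonneg (le_of_lt hα') (le_of_lt hp1), (div_le_one hp1).2 hd1, ?_,
          div_nonneg (le_of_lt hα') (le_of_lt hp0), (div_le_one hp0).2 hd0⟩
        rw [hs, ← div_div, div_mul_cancel₀ _ hne]
      have hib : ∀ f : Ω → ℝ, Measurable[m0] f → (∀ᵐ ω ∂μ, |f ω| ≤ 1) → Integrable f μ :=
        fun f hf hb => integrable_of_bound (hf.aestronglyMeasurable (μ := μ)) hb
      have habs : ∀ᵐ ω ∂μ, |1 - (1 - α) / Df a (u + 1) ω| ≤ 1 := by
        filter_upwards [hc] with ω hω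
        exact abs_le.2 ⟨by linarith [hω.2.1], by linarith [hω.1]⟩
      have hvabs : ∀ᵐ ω ∂μ, |J (Cs R u) ω * ((1 - α) / Df a (u + 1) ω)| ≤ 1 := by
        filter_upwards [hc] with ω hω
        rw [abs_mul]
        calc |J (Cs R u) ω| * |(1 - α) / Df a (u + 1) ω| ≤ 1 * 1 :=
              mul_le_mul (J_abs_le_one _ _) (abs_le.2 ⟨by linarith [hω.1], hω.2.1⟩)
                (abs_nonneg _) zero_le_one
          _ = 1 := by ring
      have hi1 : Integrable (fun ω => J (Cs R u) ω * J (R u) ω) μ := by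
        refine hib _ ((J_mea hCu).mul (J_mea hRu)) (Eventually.of_forall fun ω => ?_)
        rw [abs_mul]
        calc |J (Cs R u) ω| * |J (R u) ω| ≤ 1 * 1 :=
              mul_le_mul (J_abs_le_one _ _) (J_abs_le_one _ _) (abs_nonneg _) zero_le_one
          _ = 1 := by ring
      have hi2 : Integrable (fun ω => J (Cs R (u + 1)) ω * (1 - (1 - α) / Df a (u + 1) ω)) μ := by
        refine hib _ ((J_mea hCu1).mul (measurable_const.sub hcm)) ?_
        filter_upwards [habs] with ω hω
        rw [abs_mul]
        calc |J (Cs R (u + 1)) ω| * |1 - (1 - α) / Df a (u + 1) ω| ≤ 1 * 1 :=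
              mul_le_mul (J_abs_le_one _ _) hω (abs_nonneg _) zero_le_one
          _ = 1 := by ring
      have hi3 : Integrable
          (fun ω => J (Cs R u) ω * ((1 - α) / Df a (u + 1) ω) * J (R u) ω) μ := by
        refine hib _ (((J_mea hCu).mul hcm).mul (J_mea hRu)) ?_
        filter_upwards [hvabs] with ω hω
        rw [abs_mul]
        calc |J (Cs R u) ω * ((1 - α) / Df a (u + 1) ω)| * |J (R u) ω| ≤ 1 * 1 :=
              mul_le_mul hω (J_abs_le_one _ _) (abs_nonneg _) zero_le_one
          _ = 1 := by ring
      have hi4 : Integrable (fun ω => J (Cs R u) ω * (1 - (1 - α) / Df a (u + 1) ω)) μ := by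
        refine hib _ ((J_mea hCu).mul (measurable_const.sub hcm)) ?_
        filter_upwards [habs] with ω hω
        rw [abs_mul]
        calc |J (Cs R u) ω| * |1 - (1 - α) / Df a (u + 1) ω| ≤ 1 * 1 :=
              mul_le_mul (J_abs_le_one _ _) hω (abs_nonneg _) zero_le_one
          _ = 1 := by ring
      have hi5 : Integrable
          (fun ω => J (Cs R u) ω * ((1 - α) / Df a (u + 1) ω) * a u ω) μ := by
        refine hib _ (((J_mea hCu).mul hcm).mul hau) ?_
        filter_upwards [hvabs] with ω hω
        rw [abs_mul]
        calc |J (Cs R u) ω * ((1 - α) / Df a (u + 1) ω)| * |a u ω| ≤ 1 * 1 :=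
              mul_le_mul hω (hamem' u hum ω) (abs_nonneg _) zero_le_one
          _ = 1 := by ring
      -- a.e. the null set `N u` is full
      have hPnP : (fun ω => J (N u ∩ Cs R u) ω) =ᵐ[μ] fun ω => J (Cs R u) ω := by
        filter_upwards [hN_ae u hum] with ω hω
        by_cases hcω : ω ∈ Cs R u
        · rw [J_of_mem (Set.mem_inter hω hcω), J_of_mem hcω]
        · rw [J_of_not_mem (fun h => hcω h.2), J_of_not_mem hcω]
      have hτ : (μ ((R u ∩ Cs R u) ∩ N u)).toReal
          = ∫ ω, J (Cs R u) ω * J (R u) ω ∂μ := by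
        have hset : (R u ∩ Cs R u) ∩ N u = (N u ∩ Cs R u) ∩ R u := by
          ext ω; simp only [Set.mem_inter_iff]; tauto
        rw [hset, ← integral_J (hNCu.inter hRu)]
        refine integral_congr_ae ?_
        filter_upwards [hPnP] with ω hω
        rw [J_inter, hω]
      have hw : ∫ ω, J (Cs R u) ω * ((1 - α) / Df a (u + 1) ω) * J (R u) ω ∂μ
          = ∫ ω, J (Cs R u) ω * ((1 - α) / Df a (u + 1) ω) * a u ω ∂μ := by
        have hFu : Fm G R u ≤ m0 := Fm_le hG_le hR_meas hum
        have hDF : Measurable[Fm G R u] (Df a (u + 1)) := by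
          refine Df_mea fun s hs => ?_
          have h1 : G s ≤ Fm G R u := le_trans (hG_mono s u (by omega)) le_sup_left
          exact (ha_meas s (by omega)).mono h1 le_rfl
        have hvF : StronglyMeasurable[Fm G R u]
            (fun ω => J (Cs R u) ω * ((1 - α) / Df a (u + 1) ω)) :=
          ((J_mea (Cs_mea_Fm le_rfl)).mul (hDF.const_div _)).stronglyMeasurable
        refine int_weight_eq (m0 := m0) hFu hRu hvF hvabs ?_
        filter_upwards [hvalid u hum, hN_ae u hum] with ω hω hNω
        intro hz
        have hmem : ω ∈ Cs R u := by
          by_contra hmem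
          exact hz (by rw [J_of_not_mem hmem, zero_mul])
        exact hω ⟨hNω, hmem⟩
      rw [Finset.sum_eq_sum_Ico_succ_bot (by omega : u < m + 1)]
      calc (μ ((R u ∩ Cs R u) ∩ N u)).toReal
            + ∑ t ∈ Finset.Ico (u + 1) (m + 1), (μ ((R t ∩ Cs R t) ∩ N t)).toReal
          = (∫ ω, J (Cs R u) ω * J (R u) ω ∂μ)
            + ∫ ω, J (Cs R (u + 1)) ω * (1 - (1 - α) / Df a (u + 1) ω) ∂μ := by
            rw [hτ, hIH]
        _ = ∫ ω, (J (Cs R u) ω * J (R u) ω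
            + J (Cs R (u + 1)) ω * (1 - (1 - α) / Df a (u + 1) ω)) ∂μ :=
            (integral_add hi1 hi2).symm
        _ = ∫ ω, (J (Cs R u) ω * ((1 - α) / Df a (u + 1) ω) * J (R u) ω
            + J (Cs R u) ω * (1 - (1 - α) / Df a (u + 1) ω)) ∂μ := by
            have hfg : (fun ω => J (Cs R u) ω * J (R u) ω
                + J (Cs R (u + 1)) ω * (1 - (1 - α) / Df a (u + 1) ω))
                = fun ω => J (Cs R u) ω * ((1 - α) / Df a (u + 1) ω) * J (R u) ω
                + J (Cs R u) ω * (1 - (1 - α) / Df a (u + 1) ω) := by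
              funext ω
              have hC1 : J (Cs R (u + 1)) ω = (1 - J (R u) ω) * J (Cs R u) ω := by
                rw [Cs_succ, J_inter, J_compl]
              rw [hC1]
              ring
            rw [hfg]
        _ = (∫ ω, J (Cs R u) ω * ((1 - α) / Df a (u + 1) ω) * J (R u) ω ∂μ)
            + ∫ ω, J (Cs R u) ω * (1 - (1 - α) / Df a (u + 1) ω) ∂μ := integral_add hi3 hi4
        _ = (∫ ω, J (Cs R u) ω * ((1 - α) / Df a (u + 1) ω) * a u ω ∂μ)
            + ∫ ω, J (Cs R u) ω * (1 - (1 - α) / Df a (u + 1) ω) ∂μ := by rw [hw]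
        _ = ∫ ω, (J (Cs R u) ω * ((1 - α) / Df a (u + 1) ω) * a u ω
            + J (Cs R u) ω * (1 - (1 - α) / Df a (u + 1) ω)) ∂μ := (integral_add hi5 hi4).symm
        _ = ∫ ω, J (Cs R u) ω * (1 - (1 - α) / Df a u ω) ∂μ := by
            refine integral_congr_ae ?_
            filter_upwards [hc] with ω hω
            rw [← hω.2.2.1]
            ring
  have h0 : m + 1 - (m + 1) = 0 := by omega
  have := claim (m + 1) le_rfl
  rw [h0] at this
  have heval : ∫ ω, J (Cs R 0) ω * (1 - (1 - α) / Df a 0 ω) ∂μ = α := by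
    have hf : (fun ω => J (Cs R 0) ω * (1 - (1 - α) / Df a 0 ω)) = fun _ => α := by
      funext ω
      rw [Cs_zero, Df_zero, J_of_mem (Set.mem_univ ω)]
      simp
    rw [hf, integral_const]
    simp
  rw [heval, ← Finset.range_eq_Ico] at this
  exact this

end Main

end SECaux

open SECaux in
/-- **Sequential error control.** For a conditionally valid testing sequence
`(H_t, α_t, φ_t)_{t=0}^m` with respect to a filtration `(G_t)_{t=0}^m`, with a valid
`α`-budget `(α_t)`, rejecting the first rejected hypothesis `H_τ` controls Type I error:
`P(H_τ = 0) ≤ α`.  Here `N t = {H_t = 0}` and `R t = {φ_t = 1}`, so that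
`{H_τ = 0} = ⋃_{t ≤ m} ({τ = t} ∩ N t)` (recall `H_∞ = 1`).  Furthermore, if the testing
sequence is conditionally exact, the `α`-budget is exact, and every `H_t = 0` almost
surely, then `P(H_τ = 0) = α`. -/
theorem sequential_error_control
    {Ω : Type*} [m0 : MeasurableSpace Ω] (μ : Measure Ω) [IsProbabilityMeasure μ]
    (m : ℕ) (G : ℕ → MeasurableSpace Ω)
    (hG_mono : ∀ s t : ℕ, s ≤ t → G s ≤ G t) (hG_le : ∀ t, G t ≤ m0)
    (N R : ℕ → Set Ω) (a : ℕ → Ω → ℝ) (α : ℝ)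
    (hN_meas : ∀ t ≤ m, MeasurableSet[G t] (N t))
    (hR_meas : ∀ t ≤ m, MeasurableSet (R t))
    (ha_meas : ∀ t ≤ m, Measurable[G t] (a t))
    (ha_mem : ∀ t ≤ m, ∀ ω, a t ω ∈ Set.Icc (0 : ℝ) 1)
    -- `(α_t)_{t=0}^m` is a valid `α`-budget
    (hbudget : ∀ᵐ ω ∂μ, 1 - ∏ t ∈ Finset.range (m + 1), (1 - a t ω) ≤ α)
    -- `(H_t, α_t, φ_t)_{t=0}^m` is a conditionally valid testing sequence:
    -- `P(φ_t = 1 | σ(G_t, φ_0, …, φ_{t-1})) ≤ α_t` a.s. on `{H_t = 0, max_{s<t} φ_s = 0}`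
    (hvalid : ∀ t ≤ m, ∀ᵐ ω ∂μ,
      ω ∈ N t ∩ ⋂ s ∈ Finset.range t, (R s)ᶜ →
        (μ[(R t).indicator (fun _ => (1 : ℝ)) |
            (G t ⊔ ⨆ s ∈ Finset.range t, MeasurableSpace.generateFrom {R s})]) ω
          ≤ a t ω) :
    μ (⋃ t ∈ Finset.range (m + 1),
        ((R t ∩ ⋂ s ∈ Finset.range t, (R s)ᶜ) ∩ N t)) ≤ ENNReal.ofReal α ∧
    ((∀ t ≤ m, ∀ᵐ ω ∂μ,
        ω ∈ N t ∩ ⋂ s ∈ Finset.range t, (R s)ᶜ →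
          (μ[(R t).indicator (fun _ => (1 : ℝ)) |
              (G t ⊔ ⨆ s ∈ Finset.range t, MeasurableSpace.generateFrom {R s})]) ω
            = a t ω) →
      (∀ᵐ ω ∂μ, 1 - ∏ t ∈ Finset.range (m + 1), (1 - a t ω) = α) →
      (∀ t ≤ m, ∀ᵐ ω ∂μ, ω ∈ N t) →
      μ (⋃ t ∈ Finset.range (m + 1),
          ((R t ∩ ⋂ s ∈ Finset.range t, (R s)ᶜ) ∩ N t)) = ENNReal.ofReal α) := by
  classical
  suffices h : μ (⋃ t ∈ Finset.range (m + 1),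
        ((R t ∩ Cs R t) ∩ N t)) ≤ ENNReal.ofReal α ∧
      ((∀ t ≤ m, ∀ᵐ ω ∂μ,
        ω ∈ N t ∩ Cs R t → (μ[J (R t) | Fm G R t]) ω = a t ω) →
      (∀ᵐ ω ∂μ, 1 - Df a (m + 1) ω = α) →
      (∀ t ≤ m, ∀ᵐ ω ∂μ, ω ∈ N t) →
      μ (⋃ t ∈ Finset.range (m + 1), ((R t ∩ Cs R t) ∩ N t)) = ENNReal.ofReal α) by
    exact h
  have hvalid' : ∀ t ≤ m, ∀ᵐ ω ∂μ,
      ω ∈ N t ∩ Cs R t → (μ[J (R t) | Fm G R t]) ω ≤ a t ω := hvalid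
  have hbudget' : ∀ᵐ ω ∂μ, 1 - Df a (m + 1) ω ≤ α := hbudget
  -- basic facts
  have hD01 : ∀ ω, 0 ≤ Df a (m + 1) ω ∧ Df a (m + 1) ω ≤ 1 := by
    intro ω
    constructor
    · refine Finset.prod_nonneg fun s hs => ?_
      have := (ha_mem s (by have := Finset.mem_range.1 hs; omega) ω).2; linarith
    · refine Finset.prod_le_one
        (fun s hs => by
          have := (ha_mem s (by have := Finset.mem_range.1 hs; omega) ω).2; linarith)
        (fun s hs => by
          have := (ha_mem s (by have := Finset.mem_range.1 hs; omega) ω).1; linarith)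
  have hα0 : 0 ≤ α := by
    obtain ⟨ω, hω⟩ := hbudget'.exists
    have := (hD01 ω).2
    linarith
  have hpieces_meas : ∀ t ∈ Finset.range (m + 1),
      MeasurableSet[m0] ((R t ∩ Cs R t) ∩ N t) := by
    intro t ht
    have htm : t ≤ m := by have := Finset.mem_range.1 ht; omega
    exact ((hR_meas t htm).inter (Cs_mea_m0 hR_meas (by omega))).inter
      (hG_le t _ (hN_meas t htm))
  have hkeydisj : ∀ {s t : ℕ}, s < t →
      Disjoint ((R s ∩ Cs R s) ∩ N s) ((R t ∩ Cs R t) ∩ N t) := by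
    intro s t hst
    refine Set.disjoint_left.2 fun ω hω1 hω2 => ?_
    exact (Cs_subset_compl R hst hω2.1.2) hω1.1.1
  have hdisj : (↑(Finset.range (m + 1)) : Set ℕ).PairwiseDisjoint
      (fun t => (R t ∩ Cs R t) ∩ N t) := by
    intro s _ t _ hst
    rcases lt_or_gt_of_ne hst with h | h
    · exact hkeydisj h
    · exact (hkeydisj h).symm
  have hU : μ (⋃ t ∈ Finset.range (m + 1), ((R t ∩ Cs R t) ∩ N t))
      = ∑ t ∈ Finset.range (m + 1), μ ((R t ∩ Cs R t) ∩ N t) :=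
    measure_biUnion_finset hdisj hpieces_meas
  have htoReal : (μ (⋃ t ∈ Finset.range (m + 1), ((R t ∩ Cs R t) ∩ N t))).toReal
      = ∑ t ∈ Finset.range (m + 1), (μ ((R t ∩ Cs R t) ∩ N t)).toReal := by
    rw [hU, ENNReal.toReal_sum]
    exact fun t _ => measure_ne_top μ _
  constructor
  · -- inequality
    rcases lt_or_ge α 1 with hα1 | hα1
    · rw [ENNReal.le_ofReal_iff_toReal_le (measure_ne_top μ _) hα0, htoReal]
      exact main_le μ m G hG_mono hG_le N R a α hN_meas hR_meas ha_meas ha_mem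
        (by filter_upwards [hbudget'] with ω h; linarith) hα1 hvalid'
    · calc μ (⋃ t ∈ Finset.range (m + 1), ((R t ∩ Cs R t) ∩ N t)) ≤ 1 := prob_le_one
        _ = ENNReal.ofReal 1 := ENNReal.ofReal_one.symm
        _ ≤ ENNReal.ofReal α := ENNReal.ofReal_le_ofReal hα1
  · -- equality
    intro hvalid_eq hbudget_eq hN_ae
    have hα1 : α ≤ 1 := by
      obtain ⟨ω, hω⟩ := hbudget_eq.exists
      have := (hD01 ω).1
      linarith
    rcases lt_or_eq_of_le hα1 with hlt | heq
    · -- α < 1 : use the exact backward induction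
      have hmain := main_eq μ m G hG_mono hG_le N R a α hN_meas hR_meas ha_meas ha_mem
        (by filter_upwards [hbudget_eq] with ω h; linarith) hlt hvalid_eq hN_ae
      have h1 : (μ (⋃ t ∈ Finset.range (m + 1), ((R t ∩ Cs R t) ∩ N t))).toReal = α :=
        htoReal.trans hmain
      calc μ (⋃ t ∈ Finset.range (m + 1), ((R t ∩ Cs R t) ∩ N t))
          = ENNReal.ofReal ((μ (⋃ t ∈ Finset.range (m + 1),
              ((R t ∩ Cs R t) ∩ N t))).toReal) :=
            (ENNReal.ofReal_toReal (measure_ne_top μ _)).symm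
        _ = ENNReal.ofReal α := by rw [h1]
    · -- α = 1 : a null hypothesis is a.s. rejected
      subst heq
      have hNnull : ∀ t ≤ m, μ ((N t)ᶜ) = 0 := by
        intro t ht
        exact (MeasureTheory.ae_iff.1 (hN_ae t ht))
      -- each event "survive past s with a_s = 1" is null
      have hnull1 : ∀ s ≤ m, μ (Cs R (s + 1) ∩ {ω | a s ω = 1}) = 0 := by
        intro s hs
        have hRs : MeasurableSet[m0] (R s) := hR_meas s hs
        have hCs : MeasurableSet[m0] (Cs R s) := Cs_mea_m0 hR_meas (by omega)
        have hNs : MeasurableSet[m0] (N s) := hG_le s _ (hN_meas s hs)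
        have haG : MeasurableSet[G s] {ω | a s ω = 1} :=
          (ha_meas s hs) (measurableSet_singleton 1)
        have ha1 : MeasurableSet[m0] {ω | a s ω = 1} := hG_le s _ haG
        set B : Set Ω := (N s ∩ Cs R s) ∩ {ω | a s ω = 1} with hB
        have hBm : MeasurableSet[m0] B := (hNs.inter hCs).inter ha1
        have hiB : Integrable (J B) μ := J_integrable hBm
        have hiBR : Integrable (fun ω => J B ω * J (R s) ω) μ := by
          refine integrable_of_bound
            (((J_mea hBm).mul (J_mea hRs)).aestronglyMeasurable (μ := μ))
            (Eventually.of_forall fun ω => ?_)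
          rw [abs_mul]
          calc |J B ω| * |J (R s) ω| ≤ 1 * 1 :=
                mul_le_mul (J_abs_le_one _ _) (J_abs_le_one _ _) (abs_nonneg _) zero_le_one
            _ = 1 := by ring
        have hw : ∫ ω, J B ω * J (R s) ω ∂μ = ∫ ω, J B ω * a s ω ∂μ := by
          have hFu : Fm G R s ≤ m0 := Fm_le hG_le hR_meas hs
          have hBF : MeasurableSet[Fm G R s] B := by
            refine MeasurableSet.inter (MeasurableSet.inter ?_ (Cs_mea_Fm le_rfl)) ?_
            · exact (le_sup_left : G s ≤ Fm G R s) _ (hN_meas s hs)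
            · exact (le_sup_left : G s ≤ Fm G R s) _ haG
          refine int_weight_eq (m0 := m0) hFu hRs (J_smea hBF)
            (Eventually.of_forall (J_abs_le_one B)) ?_
          filter_upwards [hvalid_eq s hs] with ω hω
          intro hz
          have hmem : ω ∈ B := by
            by_contra hmem
            exact hz (J_of_not_mem hmem)
          exact hω ⟨hmem.1.1, hmem.1.2⟩
        have hsimp : ∫ ω, J B ω * a s ω ∂μ = ∫ ω, J B ω ∂μ := by
          refine integral_congr_ae (Eventually.of_forall fun ω => ?_)
          show J B ω * a s ω = J B ω
          by_cases hmem : ω ∈ B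
          · rw [J_of_mem hmem]
            have : a s ω = 1 := hmem.2
            rw [this, one_mul]
          · rw [J_of_not_mem hmem, zero_mul]
        have hzero : (μ (B ∩ (R s)ᶜ)).toReal = 0 := by
          have hident : ∀ ω, J (B ∩ (R s)ᶜ) ω = J B ω - J B ω * J (R s) ω := by
            intro ω
            rw [J_inter, J_compl]
            ring
          rw [← integral_J (hBm.inter hRs.compl)]
          calc ∫ ω, J (B ∩ (R s)ᶜ) ω ∂μ
              = ∫ ω, (J B ω - J B ω * J (R s) ω) ∂μ :=
                integral_congr_ae (Eventually.of_forall hident)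
            _ = (∫ ω, J B ω ∂μ) - ∫ ω, J B ω * J (R s) ω ∂μ := integral_sub hiB hiBR
            _ = 0 := by rw [hw, hsimp]; ring
        have hzero' : μ (B ∩ (R s)ᶜ) = 0 := by
          rcases (ENNReal.toReal_eq_zero_iff _).1 hzero with h | h
          · exact h
          · exact absurd h (measure_ne_top μ _)
        have hsub : Cs R (s + 1) ∩ {ω | a s ω = 1} ⊆ (B ∩ (R s)ᶜ) ∪ (N s)ᶜ := by
          intro ω hω
          rw [Cs_succ] at hω
          by_cases hN : ω ∈ N s
          · exact Or.inl ⟨⟨⟨hN, hω.1.2⟩, hω.2⟩, hω.1.1⟩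
          · exact Or.inr hN
        refine le_antisymm ?_ zero_le
        calc μ (Cs R (s + 1) ∩ {ω | a s ω = 1}) ≤ μ ((B ∩ (R s)ᶜ) ∪ (N s)ᶜ) :=
              measure_mono hsub
          _ ≤ μ (B ∩ (R s)ᶜ) + μ ((N s)ᶜ) := measure_union_le _ _
          _ = 0 := by rw [hzero', hNnull s hs, add_zero]
      -- the no-rejection event is null
      have hDnull : μ {ω | Df a (m + 1) ω ≠ 0} = 0 := by
        have : ∀ᵐ ω ∂μ, Df a (m + 1) ω = 0 := by
          filter_upwards [hbudget_eq] with ω h; linarith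
        exact MeasureTheory.ae_iff.1 this
      have hCnull : μ (Cs R (m + 1)) = 0 := by
        have hsub : Cs R (m + 1) ⊆
            (⋃ s ∈ Finset.range (m + 1), (Cs R (s + 1) ∩ {ω | a s ω = 1}))
              ∪ {ω | Df a (m + 1) ω ≠ 0} := by
          intro ω hω
          by_cases hD : Df a (m + 1) ω = 0
          · left
            have hD' : ∏ s ∈ Finset.range (m + 1), (1 - a s ω) = 0 := hD
            obtain ⟨s, hs, hfac⟩ := Finset.prod_eq_zero_iff.1 hD'
            refine Set.mem_biUnion hs ⟨Cs_anti R ?_ hω, ?_⟩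
            · have := Finset.mem_range.1 hs; omega
            · simp only [Set.mem_setOf_eq]; linarith
          · exact Or.inr hD
        refine le_antisymm ?_ zero_le
        calc μ (Cs R (m + 1))
            ≤ μ ((⋃ s ∈ Finset.range (m + 1), (Cs R (s + 1) ∩ {ω | a s ω = 1}))
                ∪ {ω | Df a (m + 1) ω ≠ 0}) := measure_mono hsub
          _ ≤ μ (⋃ s ∈ Finset.range (m + 1), (Cs R (s + 1) ∩ {ω | a s ω = 1}))
              + μ {ω | Df a (m + 1) ω ≠ 0} := measure_union_le _ _
          _ = 0 := by
              rw [hDnull, add_zero, ← Finset.set_biUnion_coe,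
                measure_biUnion_null_iff (Set.to_countable _)]
              intro s hs
              exact hnull1 s (by have := Finset.mem_range.1 (Finset.mem_coe.1 hs); omega)
      -- the union of pieces covers the complement up to null sets
      have hNbig : μ (⋃ t ∈ Finset.range (m + 1), (N t)ᶜ) = 0 := by
        rw [← Finset.set_biUnion_coe, measure_biUnion_null_iff (Set.to_countable _)]
        intro t ht
        exact hNnull t (by have := Finset.mem_range.1 (Finset.mem_coe.1 ht); omega)
      have hcompl : (Cs R (m + 1))ᶜ ⊆
          (⋃ t ∈ Finset.range (m + 1), ((R t ∩ Cs R t) ∩ N t))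
            ∪ ⋃ t ∈ Finset.range (m + 1), (N t)ᶜ := by
        intro ω hω
        have hex : ∃ t, ω ∈ R t := by
          by_contra hno
          push_neg at hno
          refine hω ?_
          simp only [Cs_def, Set.mem_iInter]
          intro s _
          exact hno s
        set t0 := Nat.find hex with ht0
        have ht0R : ω ∈ R t0 := Nat.find_spec hex
        have ht0m : t0 ≤ m := by
          by_contra hgt
          push_neg at hgt
          have : ω ∈ Cs R (m + 1) := by
            simp only [Cs_def, Set.mem_iInter]
            intro s hs
            have hsm : s < t0 := by have := Finset.mem_range.1 hs; omega
            exact Nat.find_min hex hsm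
          exact hω this
        have hC : ω ∈ Cs R t0 := by
          simp only [Cs_def, Set.mem_iInter]
          intro s hs
          exact Nat.find_min hex (Finset.mem_range.1 hs)
        by_cases hN : ω ∈ N t0
        · exact Or.inl (Set.mem_biUnion (Finset.mem_range.2 (by omega)) ⟨⟨ht0R, hC⟩, hN⟩)
        · exact Or.inr (Set.mem_biUnion (Finset.mem_range.2 (by omega)) hN)
      have hone : (1 : ENNReal) ≤ μ (⋃ t ∈ Finset.range (m + 1), ((R t ∩ Cs R t) ∩ N t)) := by
        have h1 : μ ((Cs R (m + 1))ᶜ) = 1 := by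
          rw [measure_compl (Cs_mea_m0 hR_meas le_rfl) (measure_ne_top μ _), hCnull]
          simp
        calc (1 : ENNReal) = μ ((Cs R (m + 1))ᶜ) := h1.symm
          _ ≤ μ ((⋃ t ∈ Finset.range (m + 1), ((R t ∩ Cs R t) ∩ N t))
              ∪ ⋃ t ∈ Finset.range (m + 1), (N t)ᶜ) := measure_mono hcompl
          _ ≤ μ (⋃ t ∈ Finset.range (m + 1), ((R t ∩ Cs R t) ∩ N t))
              + μ (⋃ t ∈ Finset.range (m + 1), (N t)ᶜ) := measure_union_le _ _
          _ = μ (⋃ t ∈ Finset.range (m + 1), ((R t ∩ Cs R t) ∩ N t)) := by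
              rw [hNbig, add_zero]
      rw [ENNReal.ofReal_one]
      exact le_antisymm prob_le_one hone
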